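/- Let S be any additive submonoid of ℕ with S ≠ {0} (not necessarily of finite complement). Then there exist a natural number d ≥ 1 and a d×d rational matrix A such that S(A) = S. -/

import Mathlib

open Finset

/-- The exponent semigroup of a square rational matrix: the set of natural
numbers `n` such that every entry of `A ^ n` is an integer. -/
def expSemigroup {ι : Type*} [Fintype ι] [DecidableEq ι]
    (A : Matrix ι ι ℚ) : Set ℕ :=
  {n | ∀ i j, ∃ z : ℤ, (A ^ n) i j = (z : ℚ)}

namespace Stmt19

variable {ι : Type*} [Fintype ι] [DecidableEq ι]

def funMat (σ : ι → ι) (β : ι → ℤ) : Matrix ι ι ℚ :=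
  Matrix.of fun i j => if j = σ i then (2:ℚ) ^ (β i) else 0

lemma funMat_pow (σ : ι → ι) (β : ι → ℤ) (n : ℕ) :
    (funMat σ β) ^ n = Matrix.of fun i j =>
      if j = σ^[n] i then (2:ℚ) ^ (∑ t ∈ range n, β (σ^[t] i)) else 0 := by
  induction n with
  | zero =>
    ext i j
    simp [Matrix.one_apply, eq_comm]
  | succ n ih =>
    ext i j
    rw [pow_succ', Matrix.mul_apply]
    have : ∀ k, (funMat σ β) i k * ((funMat σ β) ^ n) k j
        = if k = σ i then (2:ℚ)^(β i) * ((funMat σ β) ^ n) k j else 0 := by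
      intro k; simp [funMat, ite_mul]
    rw [Finset.sum_congr rfl (fun k _ => this k), Finset.sum_ite_eq' Finset.univ (σ i)]
    simp only [Finset.mem_univ, if_true, ih]
    have hiter : σ^[n] (σ i) = σ^[n+1] i := (Function.iterate_succ_apply σ n i).symm
    have hsum : ∑ t ∈ range (n+1), β (σ^[t] i)
        = β i + ∑ t ∈ range n, β (σ^[t] (σ i)) := by
      rw [Finset.sum_range_succ']
      simp [Function.iterate_succ_apply, add_comm]
    by_cases h : j = σ^[n+1] i
    · simp only [Matrix.of_apply, hiter, h, if_true, hsum, zpow_add₀ (two_ne_zero (α := ℚ))]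
    · simp only [Matrix.of_apply, hiter, h, if_false, mul_zero]

lemma int_exists_iff (w : ℤ) : (∃ z : ℤ, (2:ℚ) ^ w = (z : ℚ)) ↔ 0 ≤ w := by
  constructor
  · rintro ⟨z, hz⟩
    by_contra hw
    push_neg at hw
    have h1 : (2:ℚ) ^ w < 1 := zpow_lt_one_of_neg₀ (by norm_num) hw
    have h0 : (0:ℚ) < (2:ℚ) ^ w := zpow_pos (by norm_num) w
    rw [hz] at h1 h0
    have : (0:ℤ) < z := by exact_mod_cast h0
    have : (1:ℚ) ≤ (z:ℚ) := by exact_mod_cast this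
    linarith
  · intro hw
    lift w to ℕ using hw with m
    exact ⟨2 ^ m, by push_cast [zpow_natCast]; ring⟩


lemma expSemigroup_funMat (σ : ι → ι) (β : ι → ℤ) :
    expSemigroup (funMat σ β) = {n | ∀ i, 0 ≤ ∑ t ∈ range n, β (σ^[t] i)} := by
  ext n
  simp only [expSemigroup, Set.mem_setOf_eq, funMat_pow, Matrix.of_apply]
  constructor
  · intro h i
    have := h i (σ^[n] i)
    simp only [if_pos rfl] at this
    exact (int_exists_iff _).mp this
  · intro h i j
    by_cases hj : j = σ^[n] i
    · simp only [hj, if_pos rfl]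
      exact (int_exists_iff _).mpr (h i)
    · exact ⟨0, by simp [hj]⟩

lemma iterate_sumMap {α β' : Type*} (f : α → α) (g : β' → β') (n : ℕ) :
    (Sum.map f g)^[n] = Sum.map f^[n] g^[n] := by
  induction n with
  | zero => ext x <;> cases x <;> simp
  | succ n ih =>
    rw [Function.iterate_succ, Function.iterate_succ, Function.iterate_succ, ih]
    ext x; cases x <;> simp

lemma pow_submatrix_equiv {κ : Type*} [Fintype κ] [DecidableEq κ]
    (e : κ ≃ ι) (A : Matrix ι ι ℚ) (n : ℕ) :
    (A.submatrix e e) ^ n = (A ^ n).submatrix e e := by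
  induction n with
  | zero => ext i j; simp [Matrix.one_apply, Equiv.apply_eq_iff_eq]
  | succ n ih => rw [pow_succ, pow_succ, ih, Matrix.submatrix_mul_equiv]

lemma expSemigroup_submatrix {κ : Type*} [Fintype κ] [DecidableEq κ]
    (e : κ ≃ ι) (A : Matrix ι ι ℚ) :
    expSemigroup (A.submatrix e e) = expSemigroup A := by
  ext n
  simp only [expSemigroup, Set.mem_setOf_eq, pow_submatrix_equiv, Matrix.submatrix_apply]
  exact ⟨fun h i j => by simpa using h (e.symm i) (e.symm j), fun h i j => h _ _⟩

/-! ### window sums -/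

def Wsum (c : ℕ → ℤ) (i n : ℕ) : ℤ := ∑ t ∈ range n, c (i + t)

lemma wsum_add (c : ℕ → ℤ) (i m n : ℕ) :
    Wsum c i (m + n) = Wsum c i m + Wsum c (i + m) n := by
  induction n with
  | zero => simp [Wsum]
  | succ n ih =>
    have h1 : Wsum c i (m + (n+1)) = Wsum c i (m+n) + c (i+(m+n)) := by
      rw [show m+(n+1) = (m+n)+1 by ring, Wsum, Finset.sum_range_succ]; rfl
    have h2 : Wsum c (i+m) (n+1) = Wsum c (i+m) n + c (i+m+n) := by
      rw [Wsum, Finset.sum_range_succ]; rfl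
    rw [h1, ih, h2, ← add_assoc i m n]
    ring

section periodic
variable {c : ℕ → ℤ} {L : ℕ} (hper : ∀ m, c (m + L) = c m)
include hper

lemma wsum_shift_period (i n : ℕ) : Wsum c (i + L) n = Wsum c i n := by
  unfold Wsum
  refine Finset.sum_congr rfl fun t _ => ?_
  rw [show i + L + t = i + t + L by ring, hper]

lemma wsum_period_shift_one (i : ℕ) : Wsum c (i + 1) L = Wsum c i L := by
  have h1 : Wsum c i (1 + L) = Wsum c i 1 + Wsum c (i + 1) L := wsum_add c i 1 L
  have h2 : Wsum c i (L + 1) = Wsum c i L + c (i + L) := by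
    rw [Wsum, Finset.sum_range_succ]; rfl
  rw [add_comm] at h1
  rw [h1, hper] at h2
  have : Wsum c i 1 = c i := by simp [Wsum]
  rw [this] at h2
  linarith

lemma wsum_period_const (i : ℕ) : Wsum c i L = Wsum c 0 L := by
  induction i with
  | zero => rfl
  | succ i ih => rw [wsum_period_shift_one hper, ih]

lemma wsum_full (i q : ℕ) : Wsum c i (q * L) = q * Wsum c 0 L := by
  induction q with
  | zero => simp [Wsum]
  | succ q ih =>
    rw [show (q+1)*L = q*L + L by ring, wsum_add, ih, wsum_period_const hper (i + q*L)]
    push_cast; ring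

lemma wsum_shift_multi (i q n : ℕ) : Wsum c (i + q * L) n = Wsum c i n := by
  induction q with
  | zero => simp
  | succ q ih =>
    rw [show i + (q+1)*L = (i + q*L) + L by ring, wsum_shift_period hper, ih]

end periodic


/-! ### block 1 : multiples of d -/

def c1 (d : ℕ) : ℕ → ℤ := fun m => if m % d = 0 then (d:ℤ) - 1 else -1

lemma c1_per (d : ℕ) : ∀ m, c1 d (m + d) = c1 d m := by
  intro m; simp [c1, Nat.add_mod_right]

lemma c1_tau (d : ℕ) (hd : 0 < d) : Wsum (c1 d) 0 d = 0 := by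
  obtain ⟨e, rfl⟩ : ∃ e, d = e + 1 := ⟨d-1, by omega⟩
  unfold Wsum
  simp only [zero_add]
  rw [Finset.sum_range_succ']
  have h0 : c1 (e+1) 0 = ((e+1:ℕ):ℤ) - 1 := by simp [c1]
  have h1 : ∀ t ∈ range e, c1 (e+1) (t+1) = -1 := by
    intro t ht
    simp only [Finset.mem_range] at ht
    have : (t+1) % (e+1) = t+1 := Nat.mod_eq_of_lt (by omega)
    simp [c1, this]
  rw [Finset.sum_congr rfl h1, h0, Finset.sum_const, Finset.card_range]
  push_cast
  simp [nsmul_eq_mul]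

lemma block1_dvd {d n : ℕ} (hd : 0 < d) (h : d ∣ n) (i : ℕ) :
    0 ≤ Wsum (c1 d) i n := by
  obtain ⟨q, rfl⟩ := h
  rw [mul_comm, wsum_full (c1_per d), c1_tau d hd]
  simp

lemma block1_not {d n : ℕ} (hd : 0 < d) (h : ¬ d ∣ n) :
    Wsum (c1 d) 1 n < 0 := by
  have hn : n = (n/d) * d + n % d := (Nat.div_add_mod' n d).symm
  rw [hn, wsum_add, wsum_full (c1_per d), c1_tau d hd]
  have hr0 : 0 < n % d := by
    rcases Nat.eq_zero_or_pos (n % d) with h0 | h0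
    · exact absurd (Nat.dvd_of_mod_eq_zero h0) h
    · exact h0
  have hr : n % d < d := Nat.mod_lt _ hd
  have : ∀ t ∈ range (n % d), c1 d (1 + (n/d)*d + t) = -1 := by
    intro t ht
    simp only [Finset.mem_range] at ht
    have e1 : (1 + (n/d)*d + t) % d = (1+t) % d := by
      rw [show 1 + (n/d)*d + t = 1 + t + (n/d)*d by ring, Nat.add_mul_mod_self_right]
    have e2 : (1+t) % d = 1+t := Nat.mod_eq_of_lt (by omega)
    simp [c1, e1, e2]
  rw [Wsum, Finset.sum_congr rfl this, Finset.sum_const, Finset.card_range]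
  have : (0:ℤ) < (n % d : ℤ) := by exact_mod_cast hr0
  simp only [mul_zero, zero_add, nsmul_eq_mul, mul_neg, mul_one]
  omega


/-! ### block 2 : a numerical semigroup N -/

open Classical in
noncomputable def Pf (N : Set ℕ) : ℕ → ℤ := fun j => if j ∈ N then (j:ℤ) else -1

def Hc (F : ℕ) : ℤ := ((F:ℤ)+2)^2

noncomputable def gam (N : Set ℕ) (F : ℕ) : ℕ → ℤ :=
  fun j => if j = F+1 then Hc F else Pf N (j+1) - Pf N j

noncomputable def c2 (N : Set ℕ) (F : ℕ) : ℕ → ℤ := fun m => gam N F (m % (F+2))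

section block2

variable {N : Set ℕ} {F : ℕ} (hN0 : 0 ∈ N) (hNadd : ∀ a ∈ N, ∀ b ∈ N, a + b ∈ N)
  (hNbig : ∀ m, F < m → m ∈ N)

lemma Pf_le (N : Set ℕ) (j : ℕ) : Pf N j ≤ j := by
  unfold Pf; split <;> omega

lemma Pf_ge (N : Set ℕ) (j : ℕ) : -1 ≤ Pf N j := by
  unfold Pf; split <;> omega

lemma Hc_nonneg (F : ℕ) : 0 ≤ Hc F := by unfold Hc; positivity

include hN0 in
lemma Pf_zero : Pf N 0 = 0 := by simp [Pf, hN0]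

include hNbig in
lemma Pf_F1 : Pf N (F+1) = (F:ℤ)+1 := by
  have : F+1 ∈ N := hNbig _ (by omega)
  simp [Pf, this]

lemma c2_per : ∀ m, c2 N F (m + (F+2)) = c2 N F m := by
  intro m; simp [c2, Nat.add_mod_right]

lemma c2_lb (m : ℕ) : -((F:ℤ)+2) ≤ c2 N F m := by
  unfold c2 gam
  have h : m % (F+2) ≤ F+1 := by
    have := Nat.mod_lt m (show 0 < F+2 by omega); omega
  split
  · have := Hc_nonneg F; omega
  · have h1 := Pf_ge N (m % (F+2) + 1)
    have h2 := Pf_le N (m % (F+2))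
    have : (↑(m % (F+2)) : ℤ) ≤ (F:ℤ)+1 := by exact_mod_cast h
    omega

lemma c2_telescope (i n : ℕ) (h : i + n ≤ F+1) :
    Wsum (c2 N F) i n = Pf N (i+n) - Pf N i := by
  have key : ∀ t ∈ range n, c2 N F (i+t) = Pf N (i+t+1) - Pf N (i+t) := by
    intro t ht
    simp only [Finset.mem_range] at ht
    have h1 : (i+t) % (F+2) = i+t := Nat.mod_eq_of_lt (by omega)
    have h2 : i+t ≠ F+1 := by omega
    simp [c2, gam, h1, h2]
  rw [Wsum, Finset.sum_congr rfl key]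
  have := Finset.sum_range_sub (fun t => Pf N (i+t)) n
  simp only [← add_assoc] at this ⊢
  rw [this]
  simp

include hNbig in
lemma c2_wedge (i k : ℕ) (hik : i + k = F+2) (hk : 1 ≤ k) :
    Wsum (c2 N F) i k = ((F:ℤ)+1) - Pf N i + Hc F := by
  obtain ⟨k', rfl⟩ : ∃ k', k = k' + 1 := ⟨k-1, by omega⟩
  rw [Wsum, Finset.sum_range_succ, ← Wsum]
  have h1 : i + k' = F+1 := by omega
  have h2 : c2 N F (i + k') = Hc F := by
    have : (i+k') % (F+2) = i+k' := Nat.mod_eq_of_lt (by omega)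
    simp [c2, gam, this, h1]
  rw [h2, c2_telescope i k' (by omega), h1, Pf_F1 hNbig]
  try ring

include hN0 hNbig in
lemma c2_tau : Wsum (c2 N F) 0 (F+2) = ((F:ℤ)+1) + Hc F := by
  rw [c2_wedge hNbig 0 (F+2) (by omega) (by omega), Pf_zero hN0]
  ring

lemma c2_bound_small (i r : ℕ) (hr : r < F+2) :
    -(((F:ℤ)+1) * ((F:ℤ)+2)) ≤ Wsum (c2 N F) i r := by
  have h1 : ∀ t ∈ range r, -((F:ℤ)+2) ≤ c2 N F (i+t) := fun t _ => c2_lb _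
  have h2 : (r:ℤ) * (-((F:ℤ)+2)) ≤ Wsum (c2 N F) i r := by
    calc (r:ℤ) * (-((F:ℤ)+2)) = ∑ _t ∈ range r, (-((F:ℤ)+2)) := by
          rw [Finset.sum_const, Finset.card_range]; ring
      _ ≤ Wsum (c2 N F) i r := Finset.sum_le_sum h1
  have h3 : (r:ℤ) ≤ (F:ℤ)+1 := by exact_mod_cast Nat.lt_succ_iff.mp (by omega : r < (F+1)+1)
  nlinarith [h3]

include hN0 hNadd hNbig in
lemma c2_pos_small (i r : ℕ) (hi : i < F+2) (hr : r < F+2) (hrN : r ∈ N) :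
    0 ≤ Wsum (c2 N F) i r := by
  by_cases hsum : i + r ≤ F+1
  · rw [c2_telescope i r hsum]
    by_cases hiN : i ∈ N
    · have hirN : i + r ∈ N := hNadd i hiN r hrN
      have e1 : Pf N i = (i:ℤ) := by simp [Pf, hiN]
      have e2 : Pf N (i+r) = ((i+r:ℕ):ℤ) := by simp [Pf, hirN]
      rw [e1, e2]; push_cast; omega
    · have e1 : Pf N i = -1 := by simp [Pf, hiN]
      have := Pf_ge N (i+r)
      omega
  · -- wraps around
    push_neg at hsum
    set k := F+2-i with hk
    have hik : i + k = F+2 := by omega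
    have hk1 : 1 ≤ k := by omega
    set m := i + r - (F+2) with hm
    have hrm : r = k + m := by omega
    have hmF : m ≤ F := by omega
    rw [hrm, wsum_add, c2_wedge hNbig i k hik hk1, hik]
    have e3 : Wsum (c2 N F) (F+2) m = Wsum (c2 N F) 0 m := by
      have := wsum_shift_multi (c2_per (N:=N) (F:=F)) 0 1 m
      simpa using this
    rw [e3, c2_telescope 0 m (by omega), Pf_zero hN0]
    have h4 := Pf_ge N (0+m)
    have h5 := Pf_le N i
    have h6 : (i:ℤ) ≤ (F:ℤ)+1 := by exact_mod_cast Nat.lt_succ_iff.mp (by omega : i < (F+1)+1)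
    have h7 := Hc_nonneg F
    unfold Hc at h7 ⊢
    nlinarith

include hN0 hNadd hNbig in
lemma block2_mem {n : ℕ} (hn : n ∈ N) (i : ℕ) : 0 ≤ Wsum (c2 N F) i n := by
  set L := F+2 with hL
  -- reduce start index mod L
  have hred : Wsum (c2 N F) i n = Wsum (c2 N F) (i % L) n := by
    conv_lhs => rw [show i = i % L + (i/L) * L from (Nat.mod_add_div' i L).symm]
    exact wsum_shift_multi (c2_per (N:=N) (F:=F)) (i % L) (i/L) n
  rw [hred]
  set i' := i % L with hi'
  have hi'lt : i' < L := Nat.mod_lt _ (by omega)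
  have hdecomp : Wsum (c2 N F) i' n
      = ((n/L : ℕ) : ℤ) * (((F:ℤ)+1) + Hc F) + Wsum (c2 N F) i' (n % L) := by
    conv_lhs => rw [show n = (n/L) * L + n % L from (Nat.div_add_mod' n L).symm]
    rw [wsum_add, wsum_full (c2_per (N:=N) (F:=F)), c2_tau hN0 hNbig,
      wsum_shift_multi (c2_per (N:=N) (F:=F))]
  rw [hdecomp]
  rcases Nat.eq_zero_or_pos (n / L) with hq | hq
  · have hnL : n < L := (Nat.div_eq_zero_iff.mp hq).resolve_left (by omega)
    have : n % L = n := Nat.mod_eq_of_lt hnL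
    rw [hq, this]
    simpa using c2_pos_small hN0 hNadd hNbig i' n hi'lt (by omega) hn
  · have h1 := c2_bound_small (N := N) i' (n % L) (Nat.mod_lt _ (show 0 < L by omega))
    have h2 : (1:ℤ) ≤ ((n/L : ℕ) : ℤ) := by exact_mod_cast hq
    have h3 := Hc_nonneg F
    unfold Hc at h3 ⊢
    nlinarith

include hN0 hNbig in
lemma block2_not {n : ℕ} (hn : n ∉ N) : Wsum (c2 N F) 0 n < 0 := by
  have hnF : n ≤ F := by
    by_contra h
    exact hn (hNbig n (by omega))
  have hn0 : n ≠ 0 := fun h => hn (h ▸ hN0)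
  rw [c2_telescope 0 n (by omega), Pf_zero hN0]
  have : Pf N (0 + n) = -1 := by simp [Pf, hn]
  omega

end block2


/-! ### cyclic shift on `Fin L` -/

def cyc {L : ℕ} (hL : 0 < L) : Fin L → Fin L := fun i => ⟨(i.val + 1) % L, Nat.mod_lt _ hL⟩

lemma cyc_iter {L : ℕ} (hL : 0 < L) (i : Fin L) (t : ℕ) :
    (cyc hL)^[t] i = ⟨(i.val + t) % L, Nat.mod_lt _ hL⟩ := by
  induction t with
  | zero => simp [Nat.mod_eq_of_lt i.isLt]
  | succ t ih =>
    rw [Function.iterate_succ_apply', ih]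
    apply Fin.ext
    show ((i.val + t) % L + 1) % L = (i.val + (t+1)) % L
    rw [Nat.mod_add_mod, Nat.add_assoc]

lemma sum_iter_cyc {L : ℕ} (hL : 0 < L) (c : ℕ → ℤ) (hmod : ∀ x, c (x % L) = c x)
    (i : Fin L) (n : ℕ) :
    ∑ t ∈ range n, c (((cyc hL)^[t] i).val) = Wsum c i.val n := by
  refine Finset.sum_congr rfl fun t _ => ?_
  rw [cyc_iter, hmod]

lemma c1_mod (d : ℕ) (x : ℕ) : c1 d (x % d) = c1 d x := by
  simp [c1, Nat.mod_mod_of_dvd x (dvd_refl d)]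

lemma c2_mod (N : Set ℕ) (F : ℕ) (x : ℕ) : c2 N F (x % (F+2)) = c2 N F x := by
  simp [c2, Nat.mod_mod_of_dvd x (dvd_refl (F+2))]

end Stmt19

open Stmt19 Finset

theorem stmt_19 (S : Set ℕ)
    -- `S` is an additive submonoid of ℕ
    (hzero : 0 ∈ S) (hadd : ∀ a ∈ S, ∀ b ∈ S, a + b ∈ S)
    -- which is nontrivial
    (hne_triv : S ≠ {0}) :
    ∃ d : ℕ, 1 ≤ d ∧ ∃ A : Matrix (Fin d) (Fin d) ℚ, expSemigroup A = S := by
  classical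
  -- a nonzero element
  obtain ⟨a, ha, hapos⟩ : ∃ a ∈ S, 0 < a := by
    by_contra h
    push_neg at h
    apply hne_triv
    ext s
    simp only [Set.mem_singleton_iff]
    exact ⟨fun hs => by have := h s hs; omega, fun hs => hs ▸ hzero⟩
  -- multiples stay in S
  have hmul : ∀ q s, s ∈ S → q * s ∈ S := by
    intro q s hs
    induction q with
    | zero => simpa using hzero
    | succ q ih => rw [Nat.succ_mul]; exact hadd _ ih _ hs
  -- the gcd d as minimal positive difference
  set Dset : Set ℕ := {m | 0 < m ∧ ∃ x ∈ S, ∃ y ∈ S, y + m = x} with hDset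
  have haD : a ∈ Dset := ⟨hapos, a, ha, 0, hzero, by omega⟩
  set d := sInf Dset with hdd
  obtain ⟨hdpos, x, hx, y, hy, hxy⟩ : d ∈ Dset := Nat.sInf_mem ⟨a, haD⟩
  have hdvd : ∀ s ∈ S, d ∣ s := by
    intro s hs
    by_contra hnd
    have hr0 : 0 < s % d := by
      rcases Nat.eq_zero_or_pos (s % d) with h0 | h0
      · exact absurd (Nat.dvd_of_mod_eq_zero h0) hnd
      · exact h0
    have hrd : s % d < d := Nat.mod_lt _ hdpos
    have hrD : s % d ∈ Dset := by
      refine ⟨hr0, s + (s/d)*y, hadd _ hs _ (hmul _ _ hy), (s/d)*x, hmul _ _ hx, ?_⟩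
      have e1 : (s/d)*x = (s/d)*y + (s/d)*d := by rw [← hxy]; ring
      have e2 : s/d*d + s%d = s := Nat.div_add_mod' s d
      omega
    have := Nat.sInf_le hrD
    omega
  -- d divides a
  set b := a / d with hb
  have hab : d * b = a := Nat.mul_div_cancel' (hdvd a ha)
  have hbpos : 0 < b := by
    rcases Nat.eq_zero_or_pos b with h0 | h0
    · rw [h0] at hab; omega
    · exact h0
  have hba : b ≤ a := by calc b = 1*b := (one_mul b).symm
    _ ≤ d*b := Nat.mul_le_mul_right b hdpos
    _ = a := hab
  -- every a*y + d*p is in S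
  have claim1 : ∀ p, a*y + d*p ∈ S := by
    intro p
    set j := p / b with hj
    set k := p % b with hk
    have hkb : k < b := Nat.mod_lt _ hbpos
    have hka : k ≤ a := by omega
    have hmem : (a-k)*y + k*x + j*a ∈ S :=
      hadd _ (hadd _ (hmul _ _ hy) _ (hmul _ _ hx)) _ (hmul _ _ ha)
    have hpbk : b*j + k = p := Nat.div_add_mod p b
    have key : (a-k)*y + k*x + j*a = a*y + d*p := by
      have hxZ : (x:ℤ) = (y:ℤ) + (d:ℤ) := by exact_mod_cast hxy.symm
      have habZ : (d:ℤ) * (b:ℤ) = (a:ℤ) := by exact_mod_cast hab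
      have hpZ : (b:ℤ)*(j:ℤ) + (k:ℤ) = (p:ℤ) := by exact_mod_cast hpbk
      zify [hka]
      linear_combination (k:ℤ) * hxZ - (j:ℤ) * habZ + (d:ℤ) * hpZ
    rw [← key]
    exact hmem
  -- all large multiples of d are in S
  have hbig : ∀ m, b*y ≤ m → d*m ∈ S := by
    intro m hm
    have e : a*y + d*(m - b*y) = d*m := by
      have e1 : a*y = d*(b*y) := by rw [← hab]; ring
      have e2 : d*(m - b*y) + d*(b*y) = d*m := by
        rw [← Nat.mul_add]
        congr 1
        omega
      omega
    rw [← e]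
    exact claim1 _
  -- the numerical semigroup N
  set F := d * (b*y) with hF
  set N : Set ℕ := S ∪ {m | F < m} with hN
  have hN0 : 0 ∈ N := Or.inl hzero
  have hNadd : ∀ u ∈ N, ∀ v ∈ N, u + v ∈ N := by
    rintro u (hu | hu) v (hv | hv)
    · exact Or.inl (hadd _ hu _ hv)
    · exact Or.inr (by simp only [Set.mem_setOf_eq] at hv ⊢; omega)
    · exact Or.inr (by simp only [Set.mem_setOf_eq] at hu ⊢; omega)
    · exact Or.inr (by simp only [Set.mem_setOf_eq] at hu hv ⊢; omega)
  have hNbig : ∀ m, F < m → m ∈ N := fun m hm => Or.inr hm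
  have hcap : ∀ n, d ∣ n → n ∈ N → n ∈ S := by
    rintro n ⟨m, rfl⟩ (h | h)
    · exact h
    · simp only [Set.mem_setOf_eq, hF] at h
      have : b*y ≤ m := le_of_lt (Nat.lt_of_mul_lt_mul_left h)
      exact hbig m this
  -- the matrix
  have hL2 : 0 < F + 2 := by omega
  set σ : Fin d ⊕ Fin (F+2) → Fin d ⊕ Fin (F+2) := Sum.map (cyc hdpos) (cyc hL2) with hσ
  set β : Fin d ⊕ Fin (F+2) → ℤ :=
    Sum.elim (fun j => c1 d j.val) (fun j => c2 N F j.val) with hβ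
  refine ⟨d + (F+2), by omega, (funMat σ β).submatrix finSumFinEquiv.symm finSumFinEquiv.symm, ?_⟩
  rw [expSemigroup_submatrix, expSemigroup_funMat]
  have keyL : ∀ n (i : Fin d), ∑ t ∈ range n, β (σ^[t] (Sum.inl i)) = Wsum (c1 d) i.val n := by
    intro n i
    have : ∀ t, σ^[t] (Sum.inl i) = Sum.inl ((cyc hdpos)^[t] i) := by
      intro t; rw [hσ, iterate_sumMap]; rfl
    simp only [this, hβ, Sum.elim_inl]
    exact sum_iter_cyc hdpos (c1 d) (c1_mod d) i n
  have keyR : ∀ n (i : Fin (F+2)), ∑ t ∈ range n, β (σ^[t] (Sum.inr i)) = Wsum (c2 N F) i.val n := by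
    intro n i
    have : ∀ t, σ^[t] (Sum.inr i) = Sum.inr ((cyc hL2)^[t] i) := by
      intro t; rw [hσ, iterate_sumMap]; rfl
    simp only [this, hβ, Sum.elim_inr]
    exact sum_iter_cyc hL2 (c2 N F) (c2_mod N F) i n
  ext n
  simp only [Set.mem_setOf_eq]
  constructor
  · intro h
    have hdn : d ∣ n := by
      by_contra hnd
      have hd2 : 2 ≤ d := by
        have : d ≠ 1 := fun h => hnd (h ▸ one_dvd n)
        omega
      have := h (Sum.inl ⟨1, by omega⟩)
      rw [keyL] at this
      have := block1_not hdpos hnd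
      simp only [Fin.val_mk] at *
      omega
    have hnN : n ∈ N := by
      by_contra hnN
      have := h (Sum.inr ⟨0, by omega⟩)
      rw [keyR] at this
      have := block2_not hN0 hNbig hnN
      simp only [Fin.val_mk] at *
      omega
    exact hcap n hdn hnN
  · intro hn z
    cases z with
    | inl i => rw [keyL]; exact block1_dvd hdpos (hdvd n hn) i.val
    | inr i => rw [keyR]; exact block2_mem hN0 hNadd hNbig (Or.inl hn) i.val
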